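/- arXiv:1706.09510 — 3 statements merged into one kernel-verified Lean document; each statement's English description precedes it below -/
import Mathlib

section
/- Let a ≥ 2 and 0 ≤ k ≤ n, and let X_1,…,X_n be i.i.d. uniform on {1,…,a}. Then E[Y_{n,k}^{(a)}] = C(n,k) · C(a+k−1, a−1) · a^{−k}. Moreover, for fixed a and k, E[Y_{n,k}^{(a)}] ~ ((a+k−1)! / ((a−1)! (k!)^2)) · (n/a)^k as n → ∞. -/
open Finset Filter

noncomputable section
attribute [local instance] Classical.propDecidable

/-- Probability weight of the word `x` when the letters are i.i.d. with distribution `p`. -/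
def wordWt {n a : ℕ} (p : Fin a → ℝ) (x : Fin n → Fin a) : ℝ := ∏ i, p (x i)

/-- Number of weakly increasing subsequences of length `k` of the word `x`. -/
def numWIS (n a k : ℕ) (x : Fin n → Fin a) : ℕ :=
  (univ.filter fun f : Fin k → Fin n => StrictMono f ∧ Monotone (x ∘ f)).card

/-- Expected number of weakly increasing subsequences of length `k`. -/
def expY (n a k : ℕ) (p : Fin a → ℝ) : ℝ :=
  ∑ x : Fin n → Fin a, wordWt p x * (numWIS n a k x : ℝ)

lemma card_sm (k n : ℕ) :
    (univ.filter fun f : Fin k → Fin n => StrictMono f).card = n.choose k := by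
  have h2 : (univ.filter fun s : Finset (Fin n) => s.card = k).card = n.choose k := by
    rw [← Fintype.card_subtype, Fintype.card_finset_len, Fintype.card_fin]
  rw [← h2]
  refine Finset.card_bij' (fun f _ => Finset.image f univ)
    (fun s hs => ⇑(s.orderEmbOfFin (show s.card = k by simpa using (mem_filter.1 hs).2)))
    ?_ ?_ ?_ ?_
  · intro f hf
    have hsm : StrictMono f := by simpa using (mem_filter.1 hf).2
    simp only [mem_filter, mem_univ, true_and]
    rw [Finset.card_image_of_injective _ hsm.injective, card_univ, Fintype.card_fin]
  · intro s hs
    simp only [mem_filter, mem_univ, true_and]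
    exact (s.orderEmbOfFin _).strictMono
  · intro f hf
    have hsm : StrictMono f := by simpa using (mem_filter.1 hf).2
    exact (Finset.orderEmbOfFin_unique _ (fun x => Finset.mem_image_of_mem f (mem_univ x)) hsm).symm
  · intro s hs
    apply Finset.coe_injective
    simp only [Finset.coe_image, Finset.coe_univ, Set.image_univ]
    exact Finset.range_orderEmbOfFin s _

lemma ofFn_get_cast {α : Type*} (l : List α) {k : ℕ} (h : l.length = k) :
    List.ofFn (fun i : Fin k => l.get (Fin.cast h.symm i)) = l := by
  apply List.ext_get
  · simp [h]
  · intro n h1 h2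
    simp [List.get_ofFn]

def monoSymEquiv (k a : ℕ) : {g : Fin k → Fin a // Monotone g} ≃ Sym (Fin a) k where
  toFun g := ⟨(List.ofFn g.1 : Multiset (Fin a)), by simp⟩
  invFun s := ⟨fun i => (s.1.sort (· ≤ ·)).get
      (Fin.cast (by rw [Multiset.length_sort, s.2]) i),
    fun i j hij => List.Pairwise.rel_get_of_le (s.1.pairwise_sort _) (by exact hij)⟩
  left_inv := by
    rintro ⟨g, hg⟩
    have hl : (↑(List.ofFn g) : Multiset (Fin a)).sort (· ≤ ·) = List.ofFn g :=
      List.Perm.eq_of_pairwise'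
        (Multiset.pairwise_sort _ _) (List.sortedLE_ofFn_iff.2 hg).pairwise
        (Multiset.coe_eq_coe.1 (by rw [Multiset.sort_eq]))
    apply Subtype.ext
    funext i
    show List.get _ _ = g i
    rw [List.get_of_eq hl, List.get_ofFn]
    congr 1
  right_inv := by
    rintro ⟨m, hm⟩
    apply Subtype.ext
    show ((List.ofFn _ : List (Fin a)) : Multiset (Fin a)) = m
    have h : (m.sort (· ≤ ·)).length = k := by rw [Multiset.length_sort, hm]
    rw [ofFn_get_cast _ h, Multiset.sort_eq]

lemma card_monotone (k a : ℕ) :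
    (univ.filter fun g : Fin k → Fin a => Monotone g).card = (a + k - 1).choose k := by
  rw [← Fintype.card_subtype, Fintype.card_congr (monoSymEquiv k a),
    Sym.card_sym_eq_choose, Fintype.card_fin]

def splitEquiv {n k a : ℕ} (f : Fin k → Fin n) (hf : Function.Injective f) :
    (Fin n → Fin a) ≃ (Fin k → Fin a) × ({i : Fin n // i ∉ Set.range f} → Fin a) where
  toFun x := (x ∘ f, fun i => x i.1)
  invFun y := fun i => if hi : i ∈ Set.range f then y.1 hi.choose else y.2 ⟨i, hi⟩
  left_inv := by
    intro x
    funext i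
    by_cases hi : i ∈ Set.range f
    · simp only [hi, dif_pos]
      exact congrArg x hi.choose_spec
    · simp [hi]
  right_inv := by
    rintro ⟨g, h⟩
    refine Prod.ext ?_ ?_
    · funext j
      have hi : f j ∈ Set.range f := ⟨j, rfl⟩
      simp only [Function.comp_apply, hi, dif_pos]
      exact congrArg g (hf hi.choose_spec)
    · funext i
      simp [i.2]

lemma card_comp {n k a : ℕ} (f : Fin k → Fin n) (hf : Function.Injective f) :
    (univ.filter fun x : Fin n → Fin a => Monotone (x ∘ f)).card
      = (univ.filter fun g : Fin k → Fin a => Monotone g).card * a ^ (n - k) := by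
  rw [← Fintype.card_subtype, ← Fintype.card_subtype]
  have e1 : {x : Fin n → Fin a // Monotone (x ∘ f)}
      ≃ {y : (Fin k → Fin a) × ({i : Fin n // i ∉ Set.range f} → Fin a) // Monotone y.1} :=
    (splitEquiv f hf).subtypeEquiv (fun x => Iff.rfl)
  rw [Fintype.card_congr e1, Fintype.card_congr (Equiv.prodSubtypeFstEquivSubtypeProd)]
  rw [Fintype.card_prod, Fintype.card_fun, Fintype.card_fin]
  congr 2
  have : Fintype.card {i : Fin n // i ∈ Set.range f} = k := by
    rw [Fintype.card_congr (Equiv.ofInjective f hf).symm, Fintype.card_fin]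
  rw [Fintype.card_subtype_compl, this, Fintype.card_fin]

lemma sum_numWIS (n a k : ℕ) :
    ∑ x : Fin n → Fin a, numWIS n a k x
      = n.choose k * ((a + k - 1).choose k * a ^ (n - k)) := by
  have step : ∑ x : Fin n → Fin a, numWIS n a k x
      = ∑ f : Fin k → Fin n, ∑ x : Fin n → Fin a,
          if StrictMono f ∧ Monotone (x ∘ f) then 1 else 0 := by
    rw [Finset.sum_comm]
    refine Finset.sum_congr rfl fun x _ => ?_
    rw [numWIS, Finset.card_filter]
  rw [step]
  have step2 : ∀ f : Fin k → Fin n,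
      (∑ x : Fin n → Fin a, if StrictMono f ∧ Monotone (x ∘ f) then 1 else 0)
        = if StrictMono f then (a + k - 1).choose k * a ^ (n - k) else 0 := by
    intro f
    by_cases hsm : StrictMono f
    · rw [if_pos hsm, ← card_monotone k a, ← card_comp f hsm.injective]
      · rw [Finset.card_filter]
        exact Finset.sum_congr rfl fun x _ => by simp [hsm]
    · simp [hsm]
  rw [Finset.sum_congr rfl fun f _ => step2 f, ← Finset.sum_filter, Finset.sum_const,
    card_sm, smul_eq_mul]

lemma expY_eq (a k n : ℕ) (ha : 1 ≤ a) (hkn : k ≤ n) :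
    expY n a k (fun _ => (a : ℝ)⁻¹)
      = (n.choose k : ℝ) * ((a + k - 1).choose (a - 1) : ℝ) * ((a : ℝ) ^ k)⁻¹ := by
  have ha0 : (a : ℝ) ≠ 0 := Nat.cast_ne_zero.2 (by omega)
  have hcs : (a + k - 1).choose (a - 1) = (a + k - 1).choose k := by
    have h1 : (a + k - 1) - k = a - 1 := by omega
    rw [← h1, Nat.choose_symm (by omega)]
  have h1 : expY n a k (fun _ => (a : ℝ)⁻¹)
      = ((a : ℝ)⁻¹) ^ n * ((∑ x : Fin n → Fin a, numWIS n a k x : ℕ) : ℝ) := by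
    rw [expY, Nat.cast_sum, Finset.mul_sum]
    refine Finset.sum_congr rfl fun x _ => ?_
    rw [wordWt, Finset.prod_const, Finset.card_univ, Fintype.card_fin]
  rw [h1, sum_numWIS, hcs]
  push_cast
  rw [inv_pow, pow_sub₀ _ ha0 hkn]
  field_simp

lemma tendsto_ratio (k : ℕ) :
    Tendsto (fun n : ℕ => ∏ i ∈ range k, (1 - (i : ℝ) / n)) atTop (nhds 1) := by
  have h : Tendsto (fun n : ℕ => ∏ i ∈ range k, (1 - (i : ℝ) / n)) atTop
      (nhds (∏ _i ∈ range k, (1:ℝ))) := by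
    refine tendsto_finset_prod _ fun i _ => ?_
    have := (tendsto_const_div_atTop_nhds_zero_nat (i : ℝ))
    have h2 : Tendsto (fun n : ℕ => (1:ℝ) - (i:ℝ)/n) atTop (nhds (1 - 0)) :=
      tendsto_const_nhds.sub this
    simpa using h2
  simpa using h

lemma ratio_eq (a k n : ℕ) (ha : 2 ≤ a) (hkn : k ≤ n) (hn : 1 ≤ n) :
    ((n.choose k : ℝ) * ((a + k - 1).choose (a - 1) : ℝ) * ((a : ℝ) ^ k)⁻¹) /
      ((((a + k - 1).factorial : ℝ) / (((a - 1).factorial : ℝ) * ((k.factorial : ℝ)) ^ 2))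
        * ((n : ℝ) / (a : ℝ)) ^ k)
      = ∏ i ∈ range k, (1 - (i : ℝ) / n) := by
  have ha0 : (a : ℝ) ≠ 0 := Nat.cast_ne_zero.2 (by omega)
  have hn0 : (n : ℝ) ≠ 0 := Nat.cast_ne_zero.2 (by omega)
  have hkf : (k.factorial : ℝ) ≠ 0 := Nat.cast_ne_zero.2 k.factorial_ne_zero
  have haf : ((a-1).factorial : ℝ) ≠ 0 := Nat.cast_ne_zero.2 (Nat.factorial_ne_zero _)
  -- choose (a+k-1) (a-1) as factorials
  have hsub : (a + k - 1) - (a - 1) = k := by omega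
  have hC : ((a + k - 1).choose (a - 1) : ℝ)
      = ((a + k - 1).factorial : ℝ) / (((a-1).factorial : ℝ) * (k.factorial : ℝ)) := by
    rw [Nat.cast_choose ℝ (by omega : a - 1 ≤ a + k - 1), hsub]
  -- choose n k * k! = descFactorial = prod
  have hD : (n.choose k : ℝ) * (k.factorial : ℝ) = ∏ i ∈ range k, ((n : ℝ) - i) := by
    have h1 : (n.descFactorial k : ℕ) = ∏ i ∈ range k, (n - i) :=
      Nat.descFactorial_eq_prod_range n k
    have h2 : ((n.descFactorial k : ℕ) : ℝ) = ∏ i ∈ range k, ((n:ℝ) - i) := by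
      rw [h1, Nat.cast_prod]
      refine Finset.prod_congr rfl fun i hi => ?_
      have : i ≤ n := le_trans (le_of_lt (mem_range.1 hi)) hkn
      push_cast [Nat.cast_sub this]
      ring
    rw [← h2, Nat.descFactorial_eq_factorial_mul_choose]
    push_cast
    ring
  have hprod : ∏ i ∈ range k, (1 - (i : ℝ) / n) = (∏ i ∈ range k, ((n:ℝ) - i)) / n ^ k := by
    have : ∏ i ∈ range k, (1 - (i : ℝ) / n) = ∏ i ∈ range k, (((n:ℝ) - i) / n) := by
      refine Finset.prod_congr rfl fun i _ => ?_
      field_simp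
    rw [this, Finset.prod_div_distrib, Finset.prod_const, card_range]
  have hF : ((a + k - 1).factorial : ℝ) ≠ 0 := Nat.cast_ne_zero.2 (Nat.factorial_ne_zero _)
  rw [hprod, ← hD, hC]
  field_simp
  rw [mul_assoc, ← mul_pow]
  congr 2
  field_simp

/-- exact formula and asymptotics for the first moment in the uniform case. -/
theorem stmt2 (a k : ℕ) (ha : 2 ≤ a) :
    (∀ n : ℕ, k ≤ n →
      expY n a k (fun _ => (a : ℝ)⁻¹)
        = (n.choose k : ℝ) * ((a + k - 1).choose (a - 1) : ℝ) * ((a : ℝ) ^ k)⁻¹)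
    ∧ Tendsto (fun n : ℕ =>
        expY n a k (fun _ => (a : ℝ)⁻¹) /
          ((((a + k - 1).factorial : ℝ) / (((a - 1).factorial : ℝ) * ((k.factorial : ℝ)) ^ 2))
            * ((n : ℝ) / (a : ℝ)) ^ k))
        atTop (nhds 1) := by
  constructor
  · intro n hkn
    exact expY_eq a k n (by omega) hkn
  · refine (tendsto_ratio k).congr' ?_
    filter_upwards [eventually_ge_atTop (max k 1)] with n hn
    have hkn : k ≤ n := le_trans (le_max_left _ _) hn
    have hn1 : 1 ≤ n := le_trans (le_max_right _ _) hn
    rw [expY_eq a k n (by omega) hkn]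
    exact (ratio_eq a k n ha hkn hn1).symm
end
end

section
/- Let a ≥ 2 and let X_1,…,X_n be i.i.d. uniform on {1,…,a}. Then the second moment of the total number of weakly increasing subsequences satisfies the lower bound E[(Y_n^{(a)})^2] ≥ Σ_{0 ≤ k_1 + k_2 ≤ n} C(a+k_1−1, a−1) · C(a+k_2−1, a−1) · C(n, k_2) · C(n−k_2, k_1) · a^{−(k_1+k_2)}, where the sum is over pairs of nonnegative integers (k_1, k_2) with k_1 + k_2 ≤ n. -/
open Finset Filter

noncomputable section
attribute [local instance] Classical.propDecidable

/-- Second moment of the total number of weakly increasing subsequences. -/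
def expY2tot (n a : ℕ) (p : Fin a → ℝ) : ℝ :=
  ∑ x : Fin n → Fin a,
    wordWt p x * (∑ k ∈ Finset.range (n + 1), (numWIS n a k x : ℝ)) ^ 2


lemma strictMono_expand {k m : ℕ} {f : Fin k → Fin m} (hf : StrictMono f) :
    ∀ (d : ℕ) (i j : Fin k), (i : ℕ) + d = (j : ℕ) → (f i : ℕ) + d ≤ (f j : ℕ) := by
  intro d
  induction d with
  | zero => intro i j h; have : i = j := Fin.ext (by omega); subst this; omega
  | succ d ih =>
    intro i j h
    have hlt : ((j : ℕ) - 1) < k := by omega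
    have h1 := ih i ⟨(j : ℕ) - 1, hlt⟩ (by simp; omega)
    have h2 : f ⟨(j : ℕ) - 1, hlt⟩ < f j := hf (by rw [Fin.lt_iff_val_lt_val]; simp; omega)
    rw [Fin.lt_iff_val_lt_val] at h2
    omega

lemma emb_sub_lt {a k : ℕ} (ha : 1 ≤ a) {s : Finset (Fin (a - 1 + k))} (hs : s.card = k)
    (j : Fin k) : ((s.orderEmbOfFin hs j : Fin (a - 1 + k)) : ℕ) - (j : ℕ) < a := by
  have hk : 0 < k := j.pos
  have hlast : ((k : ℕ) - 1) < k := by omega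
  have h1 := strictMono_expand (s.orderEmbOfFin hs).strictMono ((k - 1) - (j : ℕ)) j
    ⟨k - 1, hlast⟩ (by simp; omega)
  have h2 : ((s.orderEmbOfFin hs ⟨k - 1, hlast⟩ : Fin (a - 1 + k)) : ℕ) < a - 1 + k :=
    (s.orderEmbOfFin hs ⟨k - 1, hlast⟩).isLt
  omega

lemma emb_ge {a k : ℕ} {s : Finset (Fin (a - 1 + k))} (hs : s.card = k)
    (j : Fin k) : (j : ℕ) ≤ ((s.orderEmbOfFin hs j : Fin (a - 1 + k)) : ℕ) := by
  have h1 := strictMono_expand (s.orderEmbOfFin hs).strictMono (j : ℕ) ⟨0, j.pos⟩ j (by simp)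
  omega

/-- number of monotone maps `Fin k → Fin a` is at least `(a+k-1).choose (a-1)`. -/
lemma card_mono_ge (a k : ℕ) (ha : 1 ≤ a) :
    (a + k - 1).choose (a - 1)
      ≤ ((univ : Finset (Fin k → Fin a)).filter fun u => Monotone u).card := by
  classical
  have hcard : (Finset.powersetCard k (univ : Finset (Fin (a - 1 + k)))).card
      = (a + k - 1).choose (a - 1) := by
    rw [Finset.card_powersetCard, card_univ, Fintype.card_fin]
    rw [show a - 1 + k = a + k - 1 by omega]
    rw [← Nat.choose_symm (by omega : a - 1 ≤ a + k - 1)]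
    congr 1
    omega
  rw [← hcard]
  apply Finset.card_le_card_of_injOn
    (fun s => fun j : Fin k =>
      if h : s.card = k then
        (⟨((s.orderEmbOfFin h j : Fin (a - 1 + k)) : ℕ) - (j : ℕ), emb_sub_lt ha h j⟩ : Fin a)
      else ⟨0, by omega⟩)
  · intro s hs
    rw [Finset.mem_coe, Finset.mem_powersetCard] at hs
    obtain ⟨-, hsc⟩ := hs
    rw [Finset.mem_coe, Finset.mem_filter]
    refine ⟨Finset.mem_univ _, ?_⟩
    intro i j hij
    simp only [dif_pos hsc]
    rw [Fin.le_iff_val_le_val]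
    simp only
    have h1 := strictMono_expand (s.orderEmbOfFin hsc).strictMono ((j : ℕ) - (i : ℕ)) i j
      (by omega)
    omega
  · intro s hs t ht heq
    rw [Finset.mem_coe, Finset.mem_powersetCard] at hs ht
    obtain ⟨-, hsc⟩ := hs
    obtain ⟨-, htc⟩ := ht
    have hemb : ⇑(s.orderEmbOfFin hsc) = ⇑(t.orderEmbOfFin htc) := by
      funext j
      have := congrFun heq j
      simp only [dif_pos hsc, dif_pos htc] at this
      have hval := congrArg Fin.val this
      simp only at hval
      have h1 := emb_ge hsc j
      have h2 := emb_ge htc j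
      exact Fin.ext (by omega)
    have : (s : Set (Fin (a - 1 + k))) = (t : Set (Fin (a - 1 + k))) := by
      rw [← Finset.range_orderEmbOfFin s hsc, ← Finset.range_orderEmbOfFin t htc, hemb]
    exact_mod_cast this

lemma card_pairs (n k1 k2 : ℕ) :
    (((univ : Finset (Fin n)).powersetCard k2).sigma fun B => Bᶜ.powersetCard k1).card
      = n.choose k2 * (n - k2).choose k1 := by
  classical
  rw [Finset.card_sigma]
  rw [Finset.sum_congr rfl (fun B hB => ?_), Finset.sum_const, Finset.card_powersetCard,
    card_univ, Fintype.card_fin, smul_eq_mul]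
  rw [Finset.mem_powersetCard] at hB
  rw [Finset.card_powersetCard, Finset.card_compl, Fintype.card_fin, hB.2]

section build

variable {n a k1 k2 : ℕ} {A B : Finset (Fin n)}

lemma card_compl_union (hA : A.card = k1) (hB : B.card = k2) (hAB : A ⊆ Bᶜ) :
    (A ∪ B)ᶜ.card = n - (k1 + k2) := by
  have hd : Disjoint A B := fun s hsA hsB x hx => by
    have := Finset.mem_compl.mp (hAB (hsA hx)); exact absurd (hsB hx) this
  rw [Finset.card_compl, Finset.card_union_of_disjoint hd, Fintype.card_fin, hA, hB]

/-- The word built from values `u` on `A`, `v` on `B`, `w` elsewhere. -/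
def buildX (hA : A.card = k1) (hB : B.card = k2) (hAB : A ⊆ Bᶜ)
    (u : Fin k1 → Fin a) (v : Fin k2 → Fin a) (w : Fin (n - (k1 + k2)) → Fin a) :
    Fin n → Fin a := fun i =>
  if hi : i ∈ A then u ((A.orderIsoOfFin hA).symm ⟨i, hi⟩)
  else if hi' : i ∈ B then v ((B.orderIsoOfFin hB).symm ⟨i, hi'⟩)
  else w (((A ∪ B)ᶜ.orderIsoOfFin (card_compl_union hA hB hAB)).symm
      ⟨i, by simp [hi, hi']⟩)

variable (hA : A.card = k1) (hB : B.card = k2) (hAB : A ⊆ Bᶜ)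
  (u : Fin k1 → Fin a) (v : Fin k2 → Fin a) (w : Fin (n - (k1 + k2)) → Fin a)

lemma buildX_comp_A : buildX hA hB hAB u v w ∘ ⇑(A.orderEmbOfFin hA) = u := by
  funext j
  have hm : A.orderEmbOfFin hA j ∈ A := Finset.orderEmbOfFin_mem A hA j
  simp only [Function.comp_apply, buildX, dif_pos hm]
  have : (⟨A.orderEmbOfFin hA j, hm⟩ : {x // x ∈ A}) = A.orderIsoOfFin hA j :=
    Subtype.ext (Finset.coe_orderIsoOfFin_apply A hA j).symm
  rw [this, OrderIso.symm_apply_apply]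

lemma buildX_comp_B : buildX hA hB hAB u v w ∘ ⇑(B.orderEmbOfFin hB) = v := by
  funext j
  have hm : B.orderEmbOfFin hB j ∈ B := Finset.orderEmbOfFin_mem B hB j
  have hnA : B.orderEmbOfFin hB j ∉ A := fun hmem =>
    (Finset.mem_compl.mp (hAB hmem)) hm
  simp only [Function.comp_apply, buildX, dif_neg hnA, dif_pos hm]
  have : (⟨B.orderEmbOfFin hB j, hm⟩ : {x // x ∈ B}) = B.orderIsoOfFin hB j :=
    Subtype.ext (Finset.coe_orderIsoOfFin_apply B hB j).symm
  rw [this, OrderIso.symm_apply_apply]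

lemma buildX_comp_compl :
    buildX hA hB hAB u v w ∘ ⇑((A ∪ B)ᶜ.orderEmbOfFin (card_compl_union hA hB hAB)) = w := by
  funext j
  have hm : (A ∪ B)ᶜ.orderEmbOfFin (card_compl_union hA hB hAB) j ∈ (A ∪ B)ᶜ :=
    Finset.orderEmbOfFin_mem _ _ j
  rw [Finset.mem_compl, Finset.mem_union] at hm
  push_neg at hm
  simp only [Function.comp_apply, buildX, dif_neg hm.1, dif_neg hm.2]
  have hm' : (A ∪ B)ᶜ.orderEmbOfFin (card_compl_union hA hB hAB) j ∈ (A ∪ B)ᶜ :=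
    Finset.orderEmbOfFin_mem _ _ j
  have : (⟨(A ∪ B)ᶜ.orderEmbOfFin (card_compl_union hA hB hAB) j, by
        simp [hm.1, hm.2]⟩ : {x // x ∈ (A ∪ B)ᶜ})
      = (A ∪ B)ᶜ.orderIsoOfFin (card_compl_union hA hB hAB) j :=
    Subtype.ext (Finset.coe_orderIsoOfFin_apply _ _ j).symm
  rw [this, OrderIso.symm_apply_apply]

end build

lemma sum_numWIS_eq (n a k1 k2 : ℕ) :
    ∑ x : Fin n → Fin a, numWIS n a k1 x * numWIS n a k2 x
      = ((univ : Finset ((Fin n → Fin a) × (Fin k1 → Fin n) × (Fin k2 → Fin n))).filter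
          fun t => (StrictMono t.2.1 ∧ Monotone (t.1 ∘ t.2.1))
            ∧ (StrictMono t.2.2 ∧ Monotone (t.1 ∘ t.2.2))).card := by
  classical
  rw [Finset.card_filter, Fintype.sum_prod_type]
  apply Finset.sum_congr rfl
  intro x _
  rw [Fintype.sum_prod_type]
  rw [numWIS, numWIS, Finset.card_filter, Finset.card_filter, Finset.sum_mul_sum]
  apply Finset.sum_congr rfl
  intro f _
  apply Finset.sum_congr rfl
  intro g _
  by_cases h1 : StrictMono f ∧ Monotone (x ∘ f) <;>
    by_cases h2 : StrictMono g ∧ Monotone (x ∘ g) <;> simp [h1, h2]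

lemma core (a n k1 k2 : ℕ) (ha : 1 ≤ a) (hkn : k1 + k2 ≤ n) :
    n.choose k2 * (n - k2).choose k1 * (a + k1 - 1).choose (a - 1)
        * (a + k2 - 1).choose (a - 1) * a ^ (n - (k1 + k2))
      ≤ ∑ x : Fin n → Fin a, numWIS n a k1 x * numWIS n a k2 x := by
  classical
  rw [sum_numWIS_eq]
  set T := ((univ : Finset ((Fin n → Fin a) × (Fin k1 → Fin n) × (Fin k2 → Fin n))).filter
          fun t => (StrictMono t.2.1 ∧ Monotone (t.1 ∘ t.2.1))
            ∧ (StrictMono t.2.2 ∧ Monotone (t.1 ∘ t.2.2))) with hT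
  set D := (((univ : Finset (Fin n)).powersetCard k2).sigma fun B => Bᶜ.powersetCard k1)
      ×ˢ ((univ : Finset (Fin k1 → Fin a)).filter Monotone)
      ×ˢ ((univ : Finset (Fin k2 → Fin a)).filter Monotone)
      ×ˢ (univ : Finset (Fin (n - (k1 + k2)) → Fin a)) with hD
  have hDcard : n.choose k2 * (n - k2).choose k1 * (a + k1 - 1).choose (a - 1)
        * (a + k2 - 1).choose (a - 1) * a ^ (n - (k1 + k2)) ≤ D.card := by
    rw [hD, Finset.card_product, Finset.card_product, Finset.card_product, card_pairs,
      Finset.card_univ]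
    have h1 := card_mono_ge a k1 ha
    have h2 := card_mono_ge a k2 ha
    have h3 : Fintype.card (Fin (n - (k1 + k2)) → Fin a) = a ^ (n - (k1 + k2)) := by
      simp [Fintype.card_fun]
    rw [h3]
    calc n.choose k2 * (n - k2).choose k1 * (a + k1 - 1).choose (a - 1)
          * (a + k2 - 1).choose (a - 1) * a ^ (n - (k1 + k2))
        = n.choose k2 * (n - k2).choose k1
            * ((a + k1 - 1).choose (a - 1) * ((a + k2 - 1).choose (a - 1)
              * a ^ (n - (k1 + k2)))) := by ring
      _ ≤ _ := Nat.mul_le_mul_left _ (Nat.mul_le_mul h1 (Nat.mul_le_mul h2 le_rfl))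
  refine le_trans hDcard (Finset.card_le_card_of_injOn
    (fun t => if h : t.1.1.card = k2 ∧ t.1.2.card = k1 ∧ t.1.2 ⊆ t.1.1ᶜ then
        (buildX h.2.1 h.1 h.2.2 t.2.1 t.2.2.1 t.2.2.2,
          ⇑(t.1.2.orderEmbOfFin h.2.1), ⇑(t.1.1.orderEmbOfFin h.1))
      else (fun _ => ⟨0, ha⟩, Fin.castLE (by omega), Fin.castLE (by omega))) ?_ ?_)
  · rintro ⟨⟨B, A⟩, u, v, w⟩ ht
    simp only [hD, Finset.mem_coe, Finset.mem_product, Finset.mem_sigma, Finset.mem_powersetCard,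
      Finset.mem_filter, Finset.mem_univ, true_and] at ht
    obtain ⟨⟨⟨-, hB⟩, hsub, hA⟩, hu, hv, -⟩ := ht
    have hcond : B.card = k2 ∧ A.card = k1 ∧ A ⊆ Bᶜ := ⟨hB, hA, hsub⟩
    simp only [dif_pos hcond]
    rw [hT, Finset.mem_coe, Finset.mem_filter]
    refine ⟨Finset.mem_univ _, ⟨(A.orderEmbOfFin _).strictMono, ?_⟩,
      ⟨(B.orderEmbOfFin _).strictMono, ?_⟩⟩
    · rw [buildX_comp_A]; exact hu
    · rw [buildX_comp_B]; exact hv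
  · rintro ⟨⟨B, A⟩, u, v, w⟩ ht ⟨⟨B', A'⟩, u', v', w'⟩ ht' heq
    simp only [hD, Finset.coe_product, Set.mem_prod, Finset.mem_coe, Finset.mem_sigma,
      Finset.mem_powersetCard, Finset.mem_filter, Finset.mem_univ, true_and] at ht ht'
    obtain ⟨⟨⟨-, hB⟩, hsub, hA⟩, hu, hv, -⟩ := ht
    obtain ⟨⟨⟨-, hB'⟩, hsub', hA'⟩, hu', hv', -⟩ := ht'
    have hcond : B.card = k2 ∧ A.card = k1 ∧ A ⊆ Bᶜ := ⟨hB, hA, hsub⟩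
    have hcond' : B'.card = k2 ∧ A'.card = k1 ∧ A' ⊆ B'ᶜ := ⟨hB', hA', hsub'⟩
    simp only [dif_pos hcond, dif_pos hcond', Prod.mk.injEq] at heq
    obtain ⟨hx, hf, hg⟩ := heq
    have hAA : A = A' := by
      have : (A : Set (Fin n)) = (A' : Set (Fin n)) := by
        rw [← Finset.range_orderEmbOfFin A hcond.2.1, ← Finset.range_orderEmbOfFin A' hcond'.2.1,
          hf]
      exact_mod_cast this
    have hBB : B = B' := by
      have : (B : Set (Fin n)) = (B' : Set (Fin n)) := by
        rw [← Finset.range_orderEmbOfFin B hcond.1, ← Finset.range_orderEmbOfFin B' hcond'.1, hg]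
      exact_mod_cast this
    subst hAA hBB
    have huu : u = u' := by
      rw [← buildX_comp_A hcond.2.1 hcond.1 hcond.2.2 u v w,
        ← buildX_comp_A hcond'.2.1 hcond'.1 hcond'.2.2 u' v' w', hx]
    have hvv : v = v' := by
      rw [← buildX_comp_B hcond.2.1 hcond.1 hcond.2.2 u v w,
        ← buildX_comp_B hcond'.2.1 hcond'.1 hcond'.2.2 u' v' w', hx]
    have hww : w = w' := by
      rw [← buildX_comp_compl hcond.2.1 hcond.1 hcond.2.2 u v w,
        ← buildX_comp_compl hcond'.2.1 hcond'.1 hcond'.2.2 u' v' w', hx]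
    simp [huu, hvv, hww]

/-- lower bound for the second moment of the total number of weakly
increasing subsequences of a uniform random word. -/
theorem stmt7 (a : ℕ) (ha : 2 ≤ a) (n : ℕ) :
    ∑ k1 ∈ Finset.range (n + 1), ∑ k2 ∈ Finset.range (n + 1 - k1),
        ((a + k1 - 1).choose (a - 1) : ℝ) * ((a + k2 - 1).choose (a - 1) : ℝ)
          * (n.choose k2 : ℝ) * ((n - k2).choose k1 : ℝ) * ((a : ℝ) ^ (k1 + k2))⁻¹
      ≤ expY2tot n a (fun _ => (a : ℝ)⁻¹) := by
  have ha1 : 1 ≤ a := by omega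
  have ha0 : (0:ℝ) < (a:ℝ) := by exact_mod_cast (by omega : 0 < a)
  have hwt : ∀ x : Fin n → Fin a, wordWt (fun _ => (a:ℝ)⁻¹) x = ((a:ℝ) ^ n)⁻¹ := by
    intro x
    rw [wordWt, Finset.prod_const, card_univ, Fintype.card_fin, inv_pow]
  have hS : ∀ k1 k2 : ℕ, (0:ℝ) ≤ ∑ x : Fin n → Fin a, (numWIS n a k1 x : ℝ) * (numWIS n a k2 x : ℝ) :=
    fun k1 k2 => Finset.sum_nonneg fun x _ => by positivity
  have hexp : expY2tot n a (fun _ => (a:ℝ)⁻¹)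
      = ∑ k1 ∈ Finset.range (n + 1), ∑ k2 ∈ Finset.range (n + 1),
          ((a:ℝ) ^ n)⁻¹ * ∑ x : Fin n → Fin a, (numWIS n a k1 x : ℝ) * (numWIS n a k2 x : ℝ) := by
    rw [expY2tot]
    simp_rw [hwt]
    rw [← Finset.mul_sum]
    simp_rw [← Finset.mul_sum]
    congr 1
    calc ∑ x : Fin n → Fin a, (∑ k ∈ Finset.range (n + 1), (numWIS n a k x : ℝ)) ^ 2
        = ∑ x : Fin n → Fin a, ∑ k1 ∈ Finset.range (n + 1), ∑ k2 ∈ Finset.range (n + 1),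
            (numWIS n a k1 x : ℝ) * (numWIS n a k2 x : ℝ) := by
          apply Finset.sum_congr rfl
          intro x _
          rw [sq, Finset.sum_mul_sum]
      _ = ∑ k1 ∈ Finset.range (n + 1), ∑ x : Fin n → Fin a, ∑ k2 ∈ Finset.range (n + 1),
            (numWIS n a k1 x : ℝ) * (numWIS n a k2 x : ℝ) := Finset.sum_comm
      _ = ∑ k1 ∈ Finset.range (n + 1), ∑ k2 ∈ Finset.range (n + 1), ∑ x : Fin n → Fin a,
            (numWIS n a k1 x : ℝ) * (numWIS n a k2 x : ℝ) :=
          Finset.sum_congr rfl fun k1 _ => Finset.sum_comm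
  rw [hexp]
  apply Finset.sum_le_sum
  intro k1 hk1
  rw [Finset.mem_range] at hk1
  have step1 : ∑ k2 ∈ Finset.range (n + 1 - k1),
        ((a + k1 - 1).choose (a - 1) : ℝ) * ((a + k2 - 1).choose (a - 1) : ℝ)
          * (n.choose k2 : ℝ) * ((n - k2).choose k1 : ℝ) * ((a : ℝ) ^ (k1 + k2))⁻¹
      ≤ ∑ k2 ∈ Finset.range (n + 1 - k1),
        ((a:ℝ) ^ n)⁻¹ * ∑ x : Fin n → Fin a, (numWIS n a k1 x : ℝ) * (numWIS n a k2 x : ℝ) := by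
    apply Finset.sum_le_sum
    intro k2 hk2
    rw [Finset.mem_range] at hk2
    have hkn : k1 + k2 ≤ n := by omega
    have hcore := core a n k1 k2 ha1 hkn
    have hcoreR : ((n.choose k2 * (n - k2).choose k1 * (a + k1 - 1).choose (a - 1)
          * (a + k2 - 1).choose (a - 1) : ℕ) : ℝ) * (a:ℝ) ^ (n - (k1 + k2))
        ≤ ∑ x : Fin n → Fin a, (numWIS n a k1 x : ℝ) * (numWIS n a k2 x : ℝ) := by
      exact_mod_cast hcore
    have hpow : (a:ℝ) ^ n = (a:ℝ) ^ (k1 + k2) * (a:ℝ) ^ (n - (k1 + k2)) := by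
      rw [← pow_add]
      congr 1
      omega
    calc ((a + k1 - 1).choose (a - 1) : ℝ) * ((a + k2 - 1).choose (a - 1) : ℝ)
          * (n.choose k2 : ℝ) * ((n - k2).choose k1 : ℝ) * ((a : ℝ) ^ (k1 + k2))⁻¹
        = ((a:ℝ) ^ n)⁻¹ * (((n.choose k2 * (n - k2).choose k1 * (a + k1 - 1).choose (a - 1)
            * (a + k2 - 1).choose (a - 1) : ℕ) : ℝ) * (a:ℝ) ^ (n - (k1 + k2))) := by
          rw [hpow]
          push_cast
          have h1 : ((a:ℝ) ^ (k1 + k2)) ≠ 0 := by positivity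
          have h2 : ((a:ℝ) ^ (n - (k1 + k2))) ≠ 0 := by positivity
          field_simp
      _ ≤ _ := mul_le_mul_of_nonneg_left hcoreR (by positivity)
  refine le_trans step1 (Finset.sum_le_sum_of_subset_of_nonneg ?_ ?_)
  · apply Finset.range_subset_range.mpr
    omega
  · intro k2 _ _
    exact mul_nonneg (by positivity) (hS k1 k2)
end
end

section
/- Let a ≥ 2, let p = (p_1,…,p_a) be a probability vector, let Y_{n,k}^{(p)} be the number of weakly increasing subsequences of length k of the i.i.d. word X_1,…,X_n with P(X_1ute = j) = p_j, and let Z_{n,k} be the number of increasing subsequences of length k of an independent uniformly random permutation of {1,…,n}. Then the total variation distance between the laws of these integer-valued random variables satisfies d_TV(Y_{n,k}^{(p)}, Z_{n,k}) ≤ C(n,2) · Σ_{i=1}^a p_i^2. Moreover, when p is the uniform distribution on {1,…,a} and a ≥ n, the bound improves to d_TV(Y_{n,k}^{(a)}, Z_{n,k}) ≤ 1 − a!/((a−n)! · a^n). -/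
open Finset Filter

noncomputable section
attribute [local instance] Classical.propDecidable

/-- Number of increasing subsequences of length `k` of the permutation `π`. -/
def numIS (n k : ℕ) (π : Equiv.Perm (Fin n)) : ℕ :=
  (univ.filter fun f : Fin k → Fin n => StrictMono f ∧ StrictMono (fun i => π (f i))).card

namespace Stmt16Aux

variable {n a : ℕ}

def W (n a : ℕ) (p : Fin a → ℝ) : ℝ :=
  ∑ S ∈ Finset.powersetCard n (Finset.univ : Finset (Fin a)), ∏ s ∈ S, p s

def word (π : Equiv.Perm (Fin n)) (S : Finset (Fin a)) (hS : S.card = n) : Fin n → Fin a :=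
  fun i => ↑(S.orderIsoOfFin hS (π i))

lemma word_injective (π : Equiv.Perm (Fin n)) (S : Finset (Fin a)) (hS : S.card = n) :
    Function.Injective (word π S hS) :=
  fun _ _ h => π.injective ((S.orderIsoOfFin hS).injective (Subtype.coe_injective h))

lemma word_image (π : Equiv.Perm (Fin n)) (S : Finset (Fin a)) (hS : S.card = n) :
    Finset.image (word π S hS) Finset.univ = S := by
  apply Finset.eq_of_subset_of_card_le
  · intro s hs
    simp only [Finset.mem_image] at hs
    obtain ⟨i, -, rfl⟩ := hs
    exact (S.orderIsoOfFin hS (π i)).2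
  · rw [Finset.card_image_of_injective _ (word_injective π S hS), Finset.card_univ,
      Fintype.card_fin, hS]

lemma word_lt_iff (π : Equiv.Perm (Fin n)) (S : Finset (Fin a)) (hS : S.card = n) (i j : Fin n) :
    word π S hS i < word π S hS j ↔ π i < π j := by
  unfold word
  rw [Subtype.coe_lt_coe, OrderIso.lt_iff_lt]

lemma wordWt_word (p : Fin a → ℝ) (π : Equiv.Perm (Fin n)) (S : Finset (Fin a))
    (hS : S.card = n) : wordWt p (word π S hS) = ∏ s ∈ S, p s := by
  unfold wordWt word
  rw [Equiv.prod_comp π (fun i => p ↑(S.orderIsoOfFin hS i))]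
  rw [show (fun i : Fin n => p ↑(S.orderIsoOfFin hS i)) = (fun s : {y // y ∈ S} => p ↑s) ∘ (S.orderIsoOfFin hS).toEquiv from rfl]
  rw [← Finset.prod_coe_sort S p]
  exact Equiv.prod_comp (S.orderIsoOfFin hS).toEquiv (fun s : {y // y ∈ S} => p ↑s)

lemma numWIS_word (k : ℕ) (π : Equiv.Perm (Fin n)) (S : Finset (Fin a)) (hS : S.card = n) :
    numWIS n a k (word π S hS) = numIS n k π := by
  unfold numWIS numIS
  congr 1
  apply Finset.filter_congr
  intro f _
  refine and_congr_right fun hf => ?_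
  constructor
  · intro h
    have hinj : Function.Injective (word π S hS ∘ f) :=
      (word_injective π S hS).comp hf.injective
    have hsm : StrictMono (word π S hS ∘ f) := h.strictMono_of_injective hinj
    intro i j hij
    exact (word_lt_iff π S hS (f i) (f j)).mp (hsm hij)
  · intro h
    intro i j hij
    rcases eq_or_lt_of_le hij with rfl | hlt
    · exact le_refl _
    · exact le_of_lt ((word_lt_iff π S hS (f i) (f j)).mpr (h hlt))


lemma sum_injective_eq (F : (Fin n → Fin a) → ℝ) :
    ∑ x ∈ Finset.univ.filter (fun x : Fin n → Fin a => Function.Injective x), F x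
      = ∑ q ∈ (Finset.univ : Finset (Equiv.Perm (Fin n))) ×ˢ
            (Finset.powersetCard n (Finset.univ : Finset (Fin a))).attach,
          F (word q.1 q.2.1 (Finset.mem_powersetCard.mp q.2.2).2) := by
  refine (Finset.sum_bij
    (fun (q : Equiv.Perm (Fin n) × {S // S ∈ Finset.powersetCard n (Finset.univ : Finset (Fin a))})
      (_ : q ∈ Finset.univ ×ˢ (Finset.powersetCard n (Finset.univ : Finset (Fin a))).attach)
      => word q.1 q.2.1 (Finset.mem_powersetCard.mp q.2.2).2)
    ?_ ?_ ?_ ?_).symm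
  · intro q _
    exact Finset.mem_filter.mpr ⟨Finset.mem_univ _, word_injective _ _ _⟩
  · rintro ⟨π₁, S₁, h₁⟩ - ⟨π₂, S₂, h₂⟩ -
    intro h
    have h' : word π₁ S₁ (Finset.mem_powersetCard.mp h₁).2
        = word π₂ S₂ (Finset.mem_powersetCard.mp h₂).2 := h
    clear h
    have hS : S₁ = S₂ := by
      rw [← word_image π₁ S₁ (Finset.mem_powersetCard.mp h₁).2,
        ← word_image π₂ S₂ (Finset.mem_powersetCard.mp h₂).2, h']
    subst hS
    have hπ : π₁ = π₂ := by
      apply Equiv.ext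
      intro i
      have h2 := congrFun h' i
      unfold word at h2
      exact (S₁.orderIsoOfFin _).injective (Subtype.coe_injective h2)
    simp [hπ]
  · intro x hx
    have hxinj : Function.Injective x := (Finset.mem_filter.mp hx).2
    have hS : (Finset.image x Finset.univ).card = n := by
      rw [Finset.card_image_of_injective _ hxinj, Finset.card_univ, Fintype.card_fin]
    have hmem : Finset.image x Finset.univ ∈
        Finset.powersetCard n (Finset.univ : Finset (Fin a)) :=
      Finset.mem_powersetCard.mpr ⟨Finset.subset_univ _, hS⟩
    set S := Finset.image x Finset.univ with hSdef
    have hxm : ∀ i, x i ∈ S := fun i => Finset.mem_image_of_mem x (Finset.mem_univ i)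
    set σ : Fin n → Fin n := fun i => (S.orderIsoOfFin hS).symm ⟨x i, hxm i⟩ with hσdef
    have hσinj : Function.Injective σ := by
      intro i j hij
      have h2 := (S.orderIsoOfFin hS).symm.injective hij
      exact hxinj (congrArg Subtype.val h2)
    refine ⟨⟨Equiv.ofBijective σ (Finite.injective_iff_bijective.mp hσinj), ⟨S, hmem⟩⟩,
      Finset.mem_product.mpr ⟨Finset.mem_univ _, Finset.mem_attach _ _⟩, ?_⟩
    funext i
    show ((S.orderIsoOfFin hS) ((S.orderIsoOfFin hS).symm ⟨x i, hxm i⟩) : Fin a) = x i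
    rw [OrderIso.apply_symm_apply]
  · intro q _
    rfl

lemma sum_all (p : Fin a → ℝ) (h1 : ∑ j, p j = 1) :
    ∑ x : Fin n → Fin a, wordWt p x = 1 := by
  unfold wordWt
  rw [← Fintype.prod_sum (fun (_ : Fin n) (v : Fin a) => p v)]
  simp [h1]

lemma sum_inj (p : Fin a → ℝ) :
    ∑ x ∈ Finset.univ.filter (fun x : Fin n → Fin a => Function.Injective x), wordWt p x
      = (n.factorial : ℝ) * W n a p := by
  rw [sum_injective_eq (wordWt p), Finset.sum_product]
  have h1 : ∀ π : Equiv.Perm (Fin n),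
      (∑ S ∈ (Finset.powersetCard n (Finset.univ : Finset (Fin a))).attach,
        wordWt p (word π S.1 (Finset.mem_powersetCard.mp S.2).2)) = W n a p := by
    intro π
    rw [Finset.sum_congr rfl fun S _ => wordWt_word p π S.1 (Finset.mem_powersetCard.mp S.2).2]
    unfold W
    exact Finset.sum_attach _ (fun S => ∏ s ∈ S, p s)
  rw [Finset.sum_congr rfl fun π _ => h1 π, Finset.sum_const, Finset.card_univ,
    Fintype.card_perm, Fintype.card_fin, nsmul_eq_mul]

lemma sum_inj_ind (k : ℕ) (p : Fin a → ℝ) (A : Set ℕ) :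
    ∑ x ∈ Finset.univ.filter (fun x : Fin n → Fin a => Function.Injective x),
        (if numWIS n a k x ∈ A then wordWt p x else 0)
      = ∑ π : Equiv.Perm (Fin n), (if numIS n k π ∈ A then W n a p else 0) := by
  rw [sum_injective_eq (fun x => if numWIS n a k x ∈ A then wordWt p x else 0),
    Finset.sum_product]
  refine Finset.sum_congr rfl fun π _ => ?_
  rw [Finset.sum_congr rfl fun S (_ : S ∈ (Finset.powersetCard n
      (Finset.univ : Finset (Fin a))).attach) => by
    rw [numWIS_word k π S.1 (Finset.mem_powersetCard.mp S.2).2,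
      wordWt_word p π S.1 (Finset.mem_powersetCard.mp S.2).2]]
  by_cases hA : numIS n k π ∈ A
  · rw [if_pos hA, Finset.sum_congr rfl fun S _ => if_pos hA]
    unfold W
    exact Finset.sum_attach _ (fun S => ∏ s ∈ S, p s)
  · rw [if_neg hA]
    exact Finset.sum_eq_zero fun S _ => if_neg hA

lemma tv_le (k : ℕ) (p : Fin a → ℝ) (h0 : ∀ j, 0 ≤ p j) (h1 : ∑ j, p j = 1) (A : Set ℕ) :
    |(∑ x : Fin n → Fin a, if numWIS n a k x ∈ A then wordWt p x else 0)
      - (∑ π : Equiv.Perm (Fin n), if numIS n k π ∈ A then ((n.factorial : ℝ))⁻¹ else 0)|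
    ≤ 1 - (n.factorial : ℝ) * W n a p := by
  set m : ℝ := (n.factorial : ℝ) with hm
  have hm0 : 0 < m := by
    rw [hm]; exact_mod_cast Nat.factorial_pos n
  have hw0 : ∀ x : Fin n → Fin a, 0 ≤ wordWt p x :=
    fun x => Finset.prod_nonneg fun i _ => h0 _
  have hsplit := Finset.sum_filter_add_sum_filter_not (Finset.univ : Finset (Fin n → Fin a))
    (fun x => Function.Injective x) (fun x => if numWIS n a k x ∈ A then wordWt p x else 0)
  have hsplitw := Finset.sum_filter_add_sum_filter_not (Finset.univ : Finset (Fin n → Fin a))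
    (fun x => Function.Injective x) (wordWt p)
  set B := ∑ x ∈ Finset.univ.filter (fun x : Fin n → Fin a => ¬ Function.Injective x),
    (if numWIS n a k x ∈ A then wordWt p x else 0) with hB
  set T := ∑ x ∈ Finset.univ.filter (fun x : Fin n → Fin a => ¬ Function.Injective x),
    wordWt p x with hT
  rw [sum_all p h1, sum_inj p] at hsplitw
  have hT1 : T = 1 - m * W n a p := by linarith
  have hT0 : 0 ≤ T := Finset.sum_nonneg fun x _ => hw0 x
  have hB0 : 0 ≤ B := Finset.sum_nonneg fun x _ => by
    by_cases h : numWIS n a k x ∈ A <;> simp [h, hw0 x]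
  have hBT : B ≤ T := Finset.sum_le_sum fun x _ => by
    by_cases h : numWIS n a k x ∈ A <;> simp [h, hw0 x]
  set NA := ∑ π : Equiv.Perm (Fin n), (if numIS n k π ∈ A then (1:ℝ) else 0) with hNA
  have hNA0 : 0 ≤ NA := Finset.sum_nonneg fun π _ => by
    by_cases h : numIS n k π ∈ A <;> simp [h]
  have hNA1 : NA ≤ m := by
    have h2 : NA ≤ ∑ _π : Equiv.Perm (Fin n), (1:ℝ) :=
      Finset.sum_le_sum fun π _ => by split_ifs <;> norm_num
    calc NA ≤ _ := h2
      _ = m := by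
        rw [Finset.sum_const, Finset.card_univ, Fintype.card_perm, Fintype.card_fin,
          nsmul_eq_mul, mul_one, hm]
  have hPA : (∑ π : Equiv.Perm (Fin n), if numIS n k π ∈ A then (m⁻¹ : ℝ) else 0)
      = NA * m⁻¹ := by
    rw [hNA, Finset.sum_mul]
    exact Finset.sum_congr rfl fun π _ => by split_ifs <;> simp
  have hSA : (∑ x : Fin n → Fin a, if numWIS n a k x ∈ A then wordWt p x else 0)
      = NA * W n a p + B := by
    rw [← hsplit, sum_inj_ind k p A]
    congr 1
    rw [hNA, Finset.sum_mul]
    exact Finset.sum_congr rfl fun π _ => by split_ifs <;> simp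
  have hW0 : 0 ≤ W n a p :=
    Finset.sum_nonneg fun S _ => Finset.prod_nonneg fun s _ => h0 s
  have hmW : m * W n a p ≤ 1 := by linarith
  have hWm : W n a p ≤ m⁻¹ := by
    rw [inv_eq_one_div, le_div_iff₀ hm0]; linarith
  have h3 : m * m⁻¹ = 1 := mul_inv_cancel₀ hm0.ne'
  have hc : NA * (m⁻¹ - W n a p) ≤ 1 - m * W n a p := by
    have h2 : NA * (m⁻¹ - W n a p) ≤ m * (m⁻¹ - W n a p) :=
      mul_le_mul_of_nonneg_right hNA1 (by linarith)
    nlinarith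
  have hc0 : 0 ≤ NA * (m⁻¹ - W n a p) := mul_nonneg hNA0 (by linarith)
  rw [hSA, hPA]
  have key : NA * W n a p + B - NA * m⁻¹ = B - NA * (m⁻¹ - W n a p) := by ring
  rw [key, abs_le]
  constructor <;> linarith

lemma collision (p : Fin a → ℝ) (h1 : ∑ j, p j = 1) {i j : Fin n} (hij : i ≠ j) :
    ∑ x : Fin n → Fin a, (if x i = x j then wordWt p x else 0) = ∑ c, p c ^ 2 := by
  have step1 : ∀ x : Fin n → Fin a,
      (if x i = x j then wordWt p x else 0)
        = ∑ c, (if x i = c ∧ x j = c then wordWt p x else 0) := by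
    intro x
    by_cases h : x i = x j
    · rw [if_pos h, Finset.sum_eq_single (x i)]
      · rw [if_pos ⟨rfl, h.symm⟩]
      · intro c _ hc; rw [if_neg]; rintro ⟨rfl, -⟩; exact hc rfl
      · intro h'; exact absurd (Finset.mem_univ _) h'
    · rw [if_neg h]
      symm
      apply Finset.sum_eq_zero
      intro c _
      rw [if_neg]; rintro ⟨rfl, h2⟩; exact h h2.symm
  rw [Finset.sum_congr rfl fun x _ => step1 x, Finset.sum_comm]
  refine Finset.sum_congr rfl fun c _ => ?_
  have step2 : ∀ x : Fin n → Fin a,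
      (if x i = c ∧ x j = c then wordWt p x else 0)
        = ∏ l, (fun (l : Fin n) (v : Fin a) =>
            if l = i ∨ l = j then (if v = c then p v else 0) else p v) l (x l) := by
    intro x
    by_cases h : x i = c ∧ x j = c
    · rw [if_pos h]
      unfold wordWt
      refine Finset.prod_congr rfl fun l _ => ?_
      by_cases hl : l = i ∨ l = j
      · simp only [if_pos hl]
        rcases hl with rfl | rfl
        · rw [if_pos h.1]
        · rw [if_pos h.2]
      · simp only [if_neg hl]
    · rw [if_neg h]
      symm
      rw [not_and_or] at h
      rcases h with h | h
      · refine Finset.prod_eq_zero (Finset.mem_univ i) ?_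
        simp [h]
      · refine Finset.prod_eq_zero (Finset.mem_univ j) ?_
        simp [h]
  rw [Finset.sum_congr rfl fun x _ => step2 x,
    ← Fintype.prod_sum (fun (l : Fin n) (v : Fin a) =>
        if l = i ∨ l = j then (if v = c then p v else 0) else p v)]
  have step3 : ∀ l : Fin n,
      (∑ v, (if l = i ∨ l = j then (if v = c then p v else 0) else p v))
        = if l = i ∨ l = j then p c else 1 := by
    intro l
    by_cases hl : l = i ∨ l = j
    · simp only [if_pos hl]
      rw [Finset.sum_ite_eq' Finset.univ c p, if_pos (Finset.mem_univ c)]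
    · simp only [if_neg hl]
      exact h1
  rw [Finset.prod_congr rfl fun l _ => step3 l, ← Finset.prod_filter, Finset.prod_const]
  have hfil : (Finset.univ.filter fun l : Fin n => l = i ∨ l = j) = {i, j} := by
    ext l
    simp [Finset.mem_insert]
  rw [hfil, Finset.card_pair hij]

lemma card_pairs_le :
    (Finset.univ.filter fun q : Fin n × Fin n => q.1 < q.2).card ≤ n.choose 2 := by
  have h := Finset.card_le_card_of_injOn
    (f := fun q : Fin n × Fin n => ({q.1, q.2} : Finset (Fin n)))
    (s := Finset.univ.filter fun q : Fin n × Fin n => q.1 < q.2)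
    (t := Finset.powersetCard 2 (Finset.univ : Finset (Fin n)))
    (fun q hq => by
      have hlt : q.1 < q.2 := (Finset.mem_filter.mp hq).2
      exact Finset.mem_powersetCard.mpr ⟨Finset.subset_univ _, Finset.card_pair hlt.ne⟩)
    (by
      intro q hq q' hq' hfe
      have hlt : q.1 < q.2 := (Finset.mem_filter.mp (Finset.mem_coe.mp hq)).2
      have hlt' : q'.1 < q'.2 := (Finset.mem_filter.mp (Finset.mem_coe.mp hq')).2
      have hfe' : ({q.1, q.2} : Finset (Fin n)) = {q'.1, q'.2} := hfe
      have h1 : q.1 ∈ ({q'.1, q'.2} : Finset (Fin n)) := by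
        rw [← hfe']; simp
      have h2 : q.2 ∈ ({q'.1, q'.2} : Finset (Fin n)) := by
        rw [← hfe']; simp
      simp only [Finset.mem_insert, Finset.mem_singleton] at h1 h2
      rcases h1 with h1 | h1 <;> rcases h2 with h2 | h2
      · exact absurd (h1 ▸ h2 ▸ hlt) (lt_irrefl _)
      · exact Prod.ext h1 h2
      · exact absurd (h2 ▸ hlt' |>.trans (h1 ▸ hlt)) (lt_irrefl _)
      · exact absurd (h1 ▸ h2 ▸ hlt) (lt_irrefl _))
  rwa [Finset.card_powersetCard, Finset.card_univ, Fintype.card_fin] at h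

lemma noninj_le (k : ℕ) (p : Fin a → ℝ) (h0 : ∀ j, 0 ≤ p j) (h1 : ∑ j, p j = 1) :
    1 - (n.factorial : ℝ) * W n a p ≤ (n.choose 2 : ℝ) * ∑ c, p c ^ 2 := by
  have hw0 : ∀ x : Fin n → Fin a, 0 ≤ wordWt p x :=
    fun x => Finset.prod_nonneg fun i _ => h0 _
  have hsplitw := Finset.sum_filter_add_sum_filter_not (Finset.univ : Finset (Fin n → Fin a))
    (fun x => Function.Injective x) (wordWt p)
  rw [sum_all p h1, sum_inj p] at hsplitw
  have hT1 : ∑ x ∈ Finset.univ.filter (fun x : Fin n → Fin a => ¬ Function.Injective x),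
      wordWt p x = 1 - (n.factorial : ℝ) * W n a p := by linarith
  rw [← hT1]
  set P : Finset (Fin n × Fin n) := Finset.univ.filter fun q : Fin n × Fin n => q.1 < q.2
    with hP
  have step1 : ∑ x ∈ Finset.univ.filter (fun x : Fin n → Fin a => ¬ Function.Injective x),
      wordWt p x
      ≤ ∑ x ∈ Finset.univ.filter (fun x : Fin n → Fin a => ¬ Function.Injective x),
        ∑ q ∈ P, (if x q.1 = x q.2 then wordWt p x else 0) := by
    refine Finset.sum_le_sum fun x hx => ?_
    have hninj : ¬ Function.Injective x := (Finset.mem_filter.mp hx).2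
    rw [Function.not_injective_iff] at hninj
    obtain ⟨u, v, hxe, hne⟩ := hninj
    obtain ⟨q₀, hq₀P, hq₀e⟩ : ∃ q₀ ∈ P, x q₀.1 = x q₀.2 := by
      rcases lt_or_gt_of_ne hne with h | h
      · exact ⟨(u, v), Finset.mem_filter.mpr ⟨Finset.mem_univ _, h⟩, hxe⟩
      · exact ⟨(v, u), Finset.mem_filter.mpr ⟨Finset.mem_univ _, h⟩, hxe.symm⟩
    calc wordWt p x = (if x q₀.1 = x q₀.2 then wordWt p x else 0) := by rw [if_pos hq₀e]
      _ ≤ _ := Finset.single_le_sum (f := fun q => if x q.1 = x q.2 then wordWt p x else 0)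
          (fun q _ => by by_cases h : x q.1 = x q.2 <;> simp [h, hw0 x]) hq₀P
  refine step1.trans ?_
  rw [Finset.sum_comm]
  have step2 : ∀ q ∈ P, (∑ x ∈ Finset.univ.filter
        (fun x : Fin n → Fin a => ¬ Function.Injective x),
        (if x q.1 = x q.2 then wordWt p x else 0)) ≤ ∑ c, p c ^ 2 := by
    intro q hq
    have hne : q.1 ≠ q.2 := ((Finset.mem_filter.mp hq).2).ne
    calc (∑ x ∈ Finset.univ.filter (fun x : Fin n → Fin a => ¬ Function.Injective x),
          (if x q.1 = x q.2 then wordWt p x else 0))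
        ≤ ∑ x : Fin n → Fin a, (if x q.1 = x q.2 then wordWt p x else 0) := by
          refine Finset.sum_le_sum_of_subset_of_nonneg (Finset.filter_subset _ _) ?_
          intro x _ _
          by_cases h : x q.1 = x q.2 <;> simp [h, hw0 x]
      _ = ∑ c, p c ^ 2 := collision p h1 hne
  calc ∑ q ∈ P, (∑ x ∈ Finset.univ.filter
        (fun x : Fin n → Fin a => ¬ Function.Injective x),
        (if x q.1 = x q.2 then wordWt p x else 0))
      ≤ ∑ _q ∈ P, ∑ c, p c ^ 2 := Finset.sum_le_sum step2
    _ = (P.card : ℝ) * ∑ c, p c ^ 2 := by rw [Finset.sum_const, nsmul_eq_mul]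
    _ ≤ (n.choose 2 : ℝ) * ∑ c, p c ^ 2 := by
        refine mul_le_mul_of_nonneg_right ?_ ?_
        · exact_mod_cast card_pairs_le (n := n)
        · exact Finset.sum_nonneg fun c _ => sq_nonneg _

lemma W_uniform :
    W n a (fun _ => (a : ℝ)⁻¹) = (a.choose n : ℝ) * ((a : ℝ)⁻¹) ^ n := by
  unfold W
  have h : ∀ S ∈ Finset.powersetCard n (Finset.univ : Finset (Fin a)),
      (∏ _s ∈ S, ((a : ℝ))⁻¹) = ((a : ℝ)⁻¹) ^ n := fun S hS => by
    rw [Finset.prod_const, (Finset.mem_powersetCard.mp hS).2]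
  rw [Finset.sum_congr rfl h, Finset.sum_const, Finset.card_powersetCard, Finset.card_univ,
    Fintype.card_fin, nsmul_eq_mul]

lemma uniform_eq (hna : n ≤ a) (ha : 0 < a) :
    1 - (n.factorial : ℝ) * ((a.choose n : ℝ) * ((a : ℝ)⁻¹) ^ n)
      = 1 - (a.factorial : ℝ) / (((a - n).factorial : ℝ) * (a : ℝ) ^ n) := by
  have h2 : ((a.choose n : ℝ)) * (n.factorial : ℝ) * ((a - n).factorial : ℝ)
      = (a.factorial : ℝ) := by
    exact_mod_cast congrArg (Nat.cast : ℕ → ℝ) (Nat.choose_mul_factorial_mul_factorial hna)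
  have hfac : (((a - n).factorial : ℝ)) ≠ 0 := Nat.cast_ne_zero.mpr (Nat.factorial_ne_zero _)
  have hap : (a : ℝ) ^ n ≠ 0 := pow_ne_zero _ (Nat.cast_ne_zero.mpr ha.ne')
  rw [inv_pow]
  congr 1
  rw [eq_div_iff (mul_ne_zero hfac hap)]
  field_simp
  linear_combination h2

end Stmt16Aux

/-- total variation bounds between the law of the number of weakly
increasing subsequences of length k of a random word and the law of the number of
increasing subsequences of length k of a uniformly random permutation. -/
theorem stmt16 (n a k : ℕ) (ha : 2 ≤ a) (hk : k ≤ n) :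
    (∀ p : Fin a → ℝ, (∀ j, 0 ≤ p j) → ∑ j, p j = 1 →
      ∀ A : Set ℕ,
        |(∑ x : Fin n → Fin a, if numWIS n a k x ∈ A then wordWt p x else 0)
          - (∑ π : Equiv.Perm (Fin n), if numIS n k π ∈ A then ((n.factorial : ℝ))⁻¹ else 0)|
        ≤ (n.choose 2 : ℝ) * ∑ i, p i ^ 2)
    ∧ (n ≤ a →
      ∀ A : Set ℕ,
        |(∑ x : Fin n → Fin a,
            if numWIS n a k x ∈ A then wordWt (fun _ => (a : ℝ)⁻¹) x else 0)
          - (∑ π : Equiv.Perm (Fin n), if numIS n k π ∈ A then ((n.factorial : ℝ))⁻¹ else 0)|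
        ≤ 1 - (a.factorial : ℝ) / (((a - n).factorial : ℝ) * (a : ℝ) ^ n)) := by
  have ha0 : 0 < a := lt_of_lt_of_le two_pos ha
  constructor
  · intro p h0 h1 A
    exact (Stmt16Aux.tv_le k p h0 h1 A).trans (Stmt16Aux.noninj_le k p h0 h1)
  · intro hna A
    have h0 : ∀ _j : Fin a, (0:ℝ) ≤ (a : ℝ)⁻¹ := fun _ => by positivity
    have h1 : ∑ _j : Fin a, ((a : ℝ))⁻¹ = 1 := by
      rw [Finset.sum_const, Finset.card_univ, Fintype.card_fin, nsmul_eq_mul,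
        mul_inv_cancel₀ (Nat.cast_ne_zero.mpr ha0.ne' : (a:ℝ) ≠ 0)]
    refine (Stmt16Aux.tv_le k _ h0 h1 A).trans ?_
    rw [Stmt16Aux.W_uniform]
    exact le_of_eq (Stmt16Aux.uniform_eq hna ha0)
end
end
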